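/- If q is not a root of unity, every irreducible representation of U_q(m_2) (in which π(q^H) is diagonalizable with discrete spectrum of finite multiplicity) is either one-dimensional with π(E) = π(F) = 0 and π(q^H) a nonzero scalar, or equivalent to π_{rs} for some nonzero r, s. -/

import Mathlib

noncomputable section

/-- The basis vector |m⟩, m ∈ ℤ. -/
def e (m : ℤ) : ℤ →₀ ℂ := Finsupp.single m 1

/-- A linear operator on the space with basis {|m⟩ : m ∈ ℤ}, given by its values on
the basis vectors. -/
def op (f : ℤ → (ℤ →₀ ℂ)) : (ℤ →₀ ℂ) →ₗ[ℂ] (ℤ →₀ ℂ) :=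
  Finsupp.lift _ _ _ f

/-- π(q^H)|m⟩ = sqᵐ|m⟩. -/
def piK (q s : ℂ) : (ℤ →₀ ℂ) →ₗ[ℂ] (ℤ →₀ ℂ) := op fun m => (s * q ^ m) • e m

/-- π(q^{-H})|m⟩ = s⁻¹q⁻ᵐ|m⟩. -/
def piKinv (q s : ℂ) : (ℤ →₀ ℂ) →ₗ[ℂ] (ℤ →₀ ℂ) := op fun m => (s⁻¹ * q ^ (-m)) • e m

/-- π(E)|m⟩ = r|m+1⟩. -/
def piE (r : ℂ) : (ℤ →₀ ℂ) →ₗ[ℂ] (ℤ →₀ ℂ) := op fun m => r • e (m + 1)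

/-- π(F)|m⟩ = r|m-1⟩. -/
def piF (r : ℂ) : (ℤ →₀ ℂ) →ₗ[ℂ] (ℤ →₀ ℂ) := op fun m => r • e (m - 1)

end

section Helpers

variable {V : Type*} [AddCommGroup V] [Module ℂ V]

lemma op_single (f : ℤ → (ℤ →₀ ℂ)) (m : ℤ) (b : ℂ) :
    (Finsupp.lift (ℤ →₀ ℂ) ℂ ℤ f) (Finsupp.single m b) = b • f m := by
  rw [Finsupp.lift_apply, Finsupp.sum_single_index (by simp)]

lemma span_invariant (T : V →ₗ[ℂ] V) {ι : Type*} (g : ι → V)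
    (h : ∀ i, T (g i) ∈ Submodule.span ℂ (Set.range g)) :
    ∀ x ∈ Submodule.span ℂ (Set.range g), T x ∈ Submodule.span ℂ (Set.range g) := by
  intro x hx
  have h2 : Submodule.span ℂ (Set.range g) ≤ (Submodule.span ℂ (Set.range g)).comap T :=
    Submodule.span_le.mpr (by rintro _ ⟨i, rfl⟩; exact h i)
  exact h2 hx

lemma unit_inj (u : (Module.End ℂ V)ˣ) {x : V} (hx : (↑u : Module.End ℂ V) x = 0) : x = 0 := by
  calc x = ((↑u⁻¹ * ↑u : Module.End ℂ V)) x := by rw [Units.inv_mul]; rfl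
    _ = (↑u⁻¹ : Module.End ℂ V) ((↑u : Module.End ℂ V) x) := rfl
    _ = 0 := by rw [hx]; simp

/-- From `K w = a • w` with `a ≠ 0` and `Kinv ∘ K = id`, deduce `Kinv w = a⁻¹ • w`. -/
lemma kinv_eig {K Kinv : V →ₗ[ℂ] V} (hKiK : ∀ x, Kinv (K x) = x)
    {a : ℂ} (ha : a ≠ 0) {w : V} (hw : K w = a • w) : Kinv w = a⁻¹ • w := by
  have h1 : w = a • Kinv w := by
    conv_lhs => rw [← hKiK w, hw, map_smul]
  calc Kinv w = a⁻¹ • (a • Kinv w) := by rw [smul_smul, inv_mul_cancel₀ ha, one_smul]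
    _ = a⁻¹ • w := by rw [← h1]

/-- Descent: if `K X = c • X K`, an eigenvector `v` of `K` exists, and every
`(K, Kinv, X)`-invariant subspace is trivial, then `X = 0`. -/
lemma aux_descent [Nontrivial V] (c μ0 : ℂ) (hc0 : c ≠ 0) (hμ0 : μ0 ≠ 0)
    (hc : ∀ m : ℕ, c ^ (m + 1) * μ0 ≠ μ0)
    (K Kinv X : V →ₗ[ℂ] V)
    (hKiK : ∀ x, Kinv (K x) = x) (hKKi : ∀ x, K (Kinv x) = x)
    (hKX : ∀ x, K (X x) = c • X (K x))
    (v : V) (hvne : v ≠ 0) (hv : K v = μ0 • v)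
    (hirr : ∀ W : Submodule ℂ V, (∀ x ∈ W, K x ∈ W ∧ Kinv x ∈ W ∧ X x ∈ W) → W = ⊥ ∨ W = ⊤) :
    X = 0 := by
  by_contra hX0
  have hXK : ∀ x, X (K x) = c⁻¹ • K (X x) := fun x => by
    rw [hKX, smul_smul, inv_mul_cancel₀ hc0, one_smul]
  have hXKi : ∀ x, X (Kinv x) = c • Kinv (X x) := by
    intro x
    have h1 : K (X (Kinv x)) = c • X x := by rw [hKX, hKKi]
    calc X (Kinv x) = Kinv (K (X (Kinv x))) := (hKiK _).symm
      _ = c • Kinv (X x) := by rw [h1, map_smul]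
  -- X is injective
  have hinj : ∀ x, X x = 0 → x = 0 := by
    have := hirr (LinearMap.ker X) (by
      intro x hx
      rw [LinearMap.mem_ker] at hx
      refine ⟨?_, ?_, ?_⟩ <;> rw [LinearMap.mem_ker]
      · rw [hXK, hx, map_zero, smul_zero]
      · rw [hXKi, hx, map_zero, smul_zero]
      · rw [hx, map_zero])
    rcases this with h | h
    · intro x hx
      have : x ∈ LinearMap.ker X := LinearMap.mem_ker.mpr hx
      rw [h] at this; simpa using this
    · exact absurd (LinearMap.ker_eq_top.mp h) hX0
  have hg_eig : ∀ m : ℕ, K ((X ^ m) v) = (c ^ m * μ0) • (X ^ m) v := by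
    intro m; induction m with
    | zero => simpa using hv
    | succ n ih =>
      have hs : (X ^ (n + 1)) v = X ((X ^ n) v) := by rw [pow_succ']; rfl
      rw [hs, hKX, ih, map_smul, smul_smul]
      ring_nf
  have hg_ne : ∀ m : ℕ, (X ^ m) v ≠ 0 := by
    intro m; induction m with
    | zero => simpa using hvne
    | succ n ih =>
      have hs : (X ^ (n + 1)) v = X ((X ^ n) v) := by rw [pow_succ']; rfl
      rw [hs]; intro h; exact ih (hinj _ h)
  set g : ℕ → V := fun m => (X ^ (m + 1)) v with hg
  set W := Submodule.span ℂ (Set.range g) with hW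
  have hWinv : ∀ x ∈ W, K x ∈ W ∧ Kinv x ∈ W ∧ X x ∈ W := by
    intro x hx
    refine ⟨span_invariant K g ?_ x hx, span_invariant Kinv g ?_ x hx,
      span_invariant X g ?_ x hx⟩
    · intro m
      show K ((X ^ (m + 1)) v) ∈ W
      rw [hg_eig (m + 1)]
      exact Submodule.smul_mem _ _ (Submodule.subset_span ⟨m, rfl⟩)
    · intro m
      show Kinv ((X ^ (m + 1)) v) ∈ W
      have ha : c ^ (m + 1) * μ0 ≠ 0 := mul_ne_zero (pow_ne_zero _ hc0) hμ0
      rw [kinv_eig hKiK ha (hg_eig (m + 1))]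
      exact Submodule.smul_mem _ _ (Submodule.subset_span ⟨m, rfl⟩)
    · intro m
      show X ((X ^ (m + 1)) v) ∈ W
      have hs : X ((X ^ (m + 1)) v) = (X ^ (m + 2)) v := by
        conv_rhs => rw [pow_succ']
        rfl
      rw [hs]
      exact Submodule.subset_span ⟨m + 1, rfl⟩
  have hWne : W ≠ ⊥ := by
    rw [Submodule.ne_bot_iff]
    exact ⟨(X ^ 1) v, Submodule.subset_span ⟨0, rfl⟩, hg_ne 1⟩
  have hWtop := (hirr W hWinv).resolve_left hWne
  have hle : W ≤ ⨆ ν ∈ {ν : ℂ | ν ≠ μ0}, Module.End.eigenspace K ν := by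
    rw [hW]
    apply Submodule.span_le.mpr
    rintro _ ⟨m, rfl⟩
    have h1 : g m ∈ Module.End.eigenspace K (c ^ (m + 1) * μ0) :=
      Module.End.mem_eigenspace_iff.mpr (hg_eig (m + 1))
    exact le_biSup (Module.End.eigenspace K) (hc m) h1
  have hdisj := (Module.End.eigenspaces_iSupIndep K).disjoint_biSup
    (show μ0 ∉ {ν : ℂ | ν ≠ μ0} by simp)
  exact hvne (Submodule.disjoint_def.mp hdisj v (Module.End.mem_eigenspace_iff.mpr hv)
    (hle (hWtop ▸ Submodule.mem_top)))

end Helpers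

/-- For q not a root of unity, every irreducible representation of
U_q(m₂) in which π(q^H) is diagonalizable (its eigenvectors span the space) with
finite-dimensional eigenspaces is either one-dimensional with π(E) = π(F) = 0 and
π(q^H) a nonzero scalar, or equivalent to π_{rs} for some nonzero r, s. -/
theorem stmt17 (q : ℂ) (hq : q ≠ 0) (hroot : ∀ n : ℕ, n ≠ 0 → q ^ n ≠ 1)
    (V : Type*) [AddCommGroup V] [Module ℂ V] [Nontrivial V]
    (K Kinv E F : V →ₗ[ℂ] V)
    (hKK : K ∘ₗ Kinv = LinearMap.id) (hKK' : Kinv ∘ₗ K = LinearMap.id)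
    (hKE : K ∘ₗ E ∘ₗ Kinv = q • E) (hKF : K ∘ₗ F ∘ₗ Kinv = q⁻¹ • F)
    (hEF : E ∘ₗ F = F ∘ₗ E)
    (hdiag : (⨆ μ : ℂ, Module.End.eigenspace K μ) = ⊤)
    (hfin : ∀ μ : ℂ, FiniteDimensional ℂ (Module.End.eigenspace K μ))
    (hirr : ∀ W : Submodule ℂ V,
      (∀ x ∈ W, K x ∈ W ∧ Kinv x ∈ W ∧ E x ∈ W ∧ F x ∈ W) → W = ⊥ ∨ W = ⊤) :
    (∃ σ : ℂ, σ ≠ 0 ∧ (∃ v : V, v ≠ 0 ∧ ∀ w : V, ∃ c : ℂ, w = c • v) ∧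
      E = 0 ∧ F = 0 ∧ K = σ • LinearMap.id) ∨
    (∃ r s : ℂ, r ≠ 0 ∧ s ≠ 0 ∧ ∃ A : (ℤ →₀ ℂ) ≃ₗ[ℂ] V,
      (∀ x, A (piK q s x) = K (A x)) ∧
      (∀ x, A (piKinv q s x) = Kinv (A x)) ∧
      (∀ x, A (piE r x) = E (A x)) ∧
      (∀ x, A (piF r x) = F (A x))) := by
  classical
  -- pointwise forms of the relations
  have hKKi : ∀ x, K (Kinv x) = x := fun x => by
    have := LinearMap.congr_fun hKK x; simpa using this
  have hKiK : ∀ x, Kinv (K x) = x := fun x => by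
    have := LinearMap.congr_fun hKK' x; simpa using this
  have hKEx : ∀ x, K (E x) = q • E (K x) := by
    intro x
    have := LinearMap.congr_fun hKE (K x)
    simpa [hKiK] using this
  have hKFx : ∀ x, K (F x) = q⁻¹ • F (K x) := by
    intro x
    have := LinearMap.congr_fun hKF (K x)
    simpa [hKiK] using this
  have hEFx : ∀ x, E (F x) = F (E x) := fun x => by
    have := LinearMap.congr_fun hEF x; simpa using this
  -- q is not a root of unity, integer version
  have hqz : ∀ m : ℤ, q ^ m = 1 → m = 0 := by
    intro m hm
    rcases lt_trichotomy m 0 with h | h | h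
    · exfalso
      have h2 : q ^ (-m) = 1 := by rw [zpow_neg, hm, inv_one]
      lift -m to ℕ using (by omega : (0:ℤ) ≤ -m) with n hn
      rw [zpow_natCast] at h2
      have hn0 : 0 < n := by omega
      exact hroot n hn0.ne' h2
    · exact h
    · exfalso
      lift m to ℕ using le_of_lt h with n hn
      rw [zpow_natCast] at hm
      have hn0 : 0 < n := by omega
      exact hroot n hn0.ne' hm
  -- all eigenvalues of K are nonzero
  have h_eig_ne : ∀ (μ : ℂ) (x : V), x ≠ 0 → K x = μ • x → μ ≠ 0 := by
    intro μ x hx h hμ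
    rw [hμ, zero_smul] at h
    exact hx (by rw [← hKiK x, h, map_zero])
  -- there is a nonzero eigenspace
  have hex : ∃ μ : ℂ, Module.End.eigenspace K μ ≠ ⊥ := by
    by_contra h
    push_neg at h
    have htb : (⊤ : Submodule ℂ V) = ⊥ := by rw [← hdiag]; simp [h]
    obtain ⟨y, hy⟩ := exists_ne (0 : V)
    have hmem : y ∈ (⊥ : Submodule ℂ V) := by rw [← htb]; trivial
    exact hy (by simpa using hmem)
  obtain ⟨μ0, hμ0b⟩ := hex
  obtain ⟨v0, hv0mem, hv0ne⟩ := Submodule.exists_mem_ne_zero_of_ne_bot hμ0b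
  have hv0 : K v0 = μ0 • v0 := Module.End.mem_eigenspace_iff.mp hv0mem
  have hμ0ne : μ0 ≠ 0 := h_eig_ne μ0 v0 hv0ne hv0
  have hcq : ∀ m : ℕ, q ^ (m + 1) * μ0 ≠ μ0 := by
    intro m h
    exact hroot (m + 1) (Nat.succ_ne_zero m)
      (mul_right_cancel₀ hμ0ne (h.trans (one_mul μ0).symm))
  have hcinv : ∀ m : ℕ, q⁻¹ ^ (m + 1) * μ0 ≠ μ0 := by
    intro m h
    have h1 : q⁻¹ ^ (m + 1) = 1 :=
      mul_right_cancel₀ hμ0ne (h.trans (one_mul μ0).symm)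
    rw [inv_pow, inv_eq_one] at h1
    exact hroot (m + 1) (Nat.succ_ne_zero m) h1
  by_cases hE0 : E = 0
  · -- then also F = 0 and the representation is one-dimensional
    have hF0 : F = 0 :=
      aux_descent q⁻¹ μ0 (inv_ne_zero hq) hμ0ne hcinv K Kinv F hKiK hKKi hKFx v0 hv0ne hv0
        (fun W hW => hirr W (fun x hx => by
          obtain ⟨h1, h2, h3⟩ := hW x hx
          exact ⟨h1, h2, by simp [hE0], h3⟩))
    left
    -- the eigenspace is invariant, hence everything
    have hKtop : Module.End.eigenspace K μ0 = ⊤ := by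
      have hinv : ∀ x ∈ Module.End.eigenspace K μ0,
          K x ∈ Module.End.eigenspace K μ0 ∧ Kinv x ∈ Module.End.eigenspace K μ0 ∧
          E x ∈ Module.End.eigenspace K μ0 ∧ F x ∈ Module.End.eigenspace K μ0 := by
        intro x hx
        rw [Module.End.mem_eigenspace_iff] at hx
        refine ⟨?_, ?_, by simp [hE0], by simp [hF0]⟩
        · rw [Module.End.mem_eigenspace_iff]
          calc K (K x) = K (μ0 • x) := by rw [hx]
            _ = μ0 • K x := map_smul K μ0 x
        · rw [Module.End.mem_eigenspace_iff, kinv_eig hKiK hμ0ne hx, map_smul, hx,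
            smul_smul, smul_smul]
          congr 1
          field_simp
      rcases hirr (Module.End.eigenspace K μ0) hinv with h | h
      · exact absurd h hμ0b
      · exact h
    have hKall : ∀ x : V, K x = μ0 • x := by
      intro x
      have : x ∈ Module.End.eigenspace K μ0 := by rw [hKtop]; trivial
      exact Module.End.mem_eigenspace_iff.mp this
    -- one-dimensionality
    have hspan : Submodule.span ℂ {v0} = ⊤ := by
      have hinv : ∀ x ∈ Submodule.span ℂ {v0},
          K x ∈ Submodule.span ℂ {v0} ∧ Kinv x ∈ Submodule.span ℂ {v0} ∧
          E x ∈ Submodule.span ℂ {v0} ∧ F x ∈ Submodule.span ℂ {v0} := by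
        intro x hx
        rw [Submodule.mem_span_singleton] at hx
        obtain ⟨c, rfl⟩ := hx
        refine ⟨?_, ?_, by simp [hE0], by simp [hF0]⟩
        · rw [hKall]
          exact Submodule.smul_mem _ _ (Submodule.smul_mem _ _ (Submodule.mem_span_singleton_self v0))
        · rw [kinv_eig hKiK hμ0ne (hKall _)]
          exact Submodule.smul_mem _ _ (Submodule.smul_mem _ _ (Submodule.mem_span_singleton_self v0))
      rcases hirr (Submodule.span ℂ {v0}) hinv with h | h
      · exact absurd (by rwa [Submodule.span_singleton_eq_bot] at h) hv0ne
      · exact h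
    refine ⟨μ0, hμ0ne, ⟨v0, hv0ne, ?_⟩, hE0, hF0, ?_⟩
    · intro w
      have hw : w ∈ Submodule.span ℂ {v0} := by rw [hspan]; trivial
      rw [Submodule.mem_span_singleton] at hw
      obtain ⟨c, hc⟩ := hw
      exact ⟨c, hc.symm⟩
    · ext x
      simp [hKall x]
  · by_cases hF0 : F = 0
    · exact absurd
        (aux_descent q μ0 hq hμ0ne hcq K Kinv E hKiK hKKi hKEx v0 hv0ne hv0
          (fun W hW => hirr W (fun x hx => by
            obtain ⟨h1, h2, h3⟩ := hW x hx
            exact ⟨h1, h2, h3, by simp [hF0]⟩))) hE0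
    right
    -- derived commutation relations
    have hEK : ∀ x, E (K x) = q⁻¹ • K (E x) := fun x => by
      rw [hKEx, smul_smul, inv_mul_cancel₀ hq, one_smul]
    have hFK : ∀ x, F (K x) = q • K (F x) := fun x => by
      rw [hKFx, smul_smul, mul_inv_cancel₀ hq, one_smul]
    have hEKi : ∀ x, E (Kinv x) = q • Kinv (E x) := by
      intro x
      have h1 : K (E (Kinv x)) = q • E x := by rw [hKEx, hKKi]
      calc E (Kinv x) = Kinv (K (E (Kinv x))) := (hKiK _).symm
        _ = q • Kinv (E x) := by rw [h1, map_smul]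
    have hFKi : ∀ x, F (Kinv x) = q⁻¹ • Kinv (F x) := by
      intro x
      have h1 : K (F (Kinv x)) = q⁻¹ • F x := by rw [hKFx, hKKi]
      calc F (Kinv x) = Kinv (K (F (Kinv x))) := (hKiK _).symm
        _ = q⁻¹ • Kinv (F x) := by rw [h1, map_smul]
    -- E and F are injective
    have hEinj : ∀ x, E x = 0 → x = 0 := by
      have := hirr (LinearMap.ker E) (by
        intro x hx
        rw [LinearMap.mem_ker] at hx
        refine ⟨?_, ?_, ?_, ?_⟩ <;> rw [LinearMap.mem_ker]
        · rw [hEK, hx, map_zero, smul_zero]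
        · rw [hEKi, hx, map_zero, smul_zero]
        · rw [hx, map_zero]
        · rw [hEFx, hx, map_zero])
      rcases this with h | h
      · intro x hx
        have hm : x ∈ LinearMap.ker E := LinearMap.mem_ker.mpr hx
        rw [h] at hm; simpa using hm
      · exact absurd (LinearMap.ker_eq_top.mp h) hE0
    have hFinj : ∀ x, F x = 0 → x = 0 := by
      have := hirr (LinearMap.ker F) (by
        intro x hx
        rw [LinearMap.mem_ker] at hx
        refine ⟨?_, ?_, ?_, ?_⟩ <;> rw [LinearMap.mem_ker]
        · rw [hFK, hx, map_zero, smul_zero]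
        · rw [hFKi, hx, map_zero, smul_zero]
        · rw [← hEFx, hx, map_zero]
        · rw [hx, map_zero])
      rcases this with h | h
      · intro x hx
        have hm : x ∈ LinearMap.ker F := LinearMap.mem_ker.mpr hx
        rw [h] at hm; simpa using hm
      · exact absurd (LinearMap.ker_eq_top.mp h) hF0
    -- EF has an eigenvector in the eigenspace of K
    haveI hfd : FiniteDimensional ℂ (Module.End.eigenspace K μ0) := hfin μ0
    haveI hnt : Nontrivial (Module.End.eigenspace K μ0) :=
      Submodule.nontrivial_iff_ne_bot.mpr hμ0b
    have hmaps : ∀ x ∈ Module.End.eigenspace K μ0,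
        (E ∘ₗ F) x ∈ Module.End.eigenspace K μ0 := by
      intro x hx
      rw [Module.End.mem_eigenspace_iff] at hx ⊢
      show K (E (F x)) = μ0 • E (F x)
      rw [hKEx, hKFx, hx]
      simp only [map_smul, smul_smul]
      congr 1
      field_simp
    obtain ⟨lam, hlam⟩ :=
      Module.End.exists_eigenvalue (((E ∘ₗ F).restrict hmaps : Module.End ℂ (Module.End.eigenspace K μ0)))
    obtain ⟨w0, hw0⟩ := hlam.exists_hasEigenvector
    have hvmem : (w0 : V) ∈ Module.End.eigenspace K μ0 := w0.2
    have hvne : (w0 : V) ≠ 0 := fun h => hw0.right (by exact_mod_cast Subtype.ext h)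
    have hv : K (w0 : V) = μ0 • (w0 : V) := Module.End.mem_eigenspace_iff.mp hvmem
    have hEFv : E (F (w0 : V)) = lam • (w0 : V) := by
      have h1 := congrArg (Subtype.val) hw0.apply_eq_smul
      simpa [LinearMap.restrict_coe_apply] using h1
    set v : V := (w0 : V) with hvdef
    -- EF = lam • id
    have hlamx : ∀ x, E (F x) = lam • x := by
      have hmemT : ∀ x, x ∈ LinearMap.ker (E ∘ₗ F - lam • LinearMap.id) ↔ E (F x) = lam • x := by
        intro x
        rw [LinearMap.mem_ker]
        simp [sub_eq_zero]
      have hinvT := hirr (LinearMap.ker (E ∘ₗ F - lam • LinearMap.id)) (by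
        intro x hx
        rw [hmemT] at hx
        refine ⟨?_, ?_, ?_, ?_⟩ <;> rw [hmemT]
        · rw [hFK, map_smul, hEK, smul_smul, mul_inv_cancel₀ hq, one_smul, hx, map_smul]
        · rw [hFKi, map_smul, hEKi, smul_smul, inv_mul_cancel₀ hq, one_smul, hx, map_smul]
        · rw [← hEFx, hx, map_smul]
        · rw [hEFx, hx, map_smul])
      rcases hinvT with h | h
      · exfalso
        have : v ∈ LinearMap.ker (E ∘ₗ F - lam • LinearMap.id) := (hmemT v).mpr hEFv
        rw [h] at this
        exact hvne (by simpa using this)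
      · intro x
        exact (hmemT x).mp (by rw [h]; trivial)
    have hFEx : ∀ x, F (E x) = lam • x := fun x => by rw [← hEFx, hlamx]
    have hlamne : lam ≠ 0 := by
      intro h
      apply hF0
      ext x
      have h1 := hlamx x
      rw [h, zero_smul] at h1
      simpa using hEinj _ h1
    -- square root of lam
    obtain ⟨r, hr⟩ := IsAlgClosed.exists_pow_nat_eq lam (n := 2) (by norm_num)
    have hrne : r ≠ 0 := by
      intro h
      rw [h] at hr
      norm_num at hr
      exact hlamne hr.symm
    -- E is invertible
    have hmul1 : E * (lam⁻¹ • F) = (1 : Module.End ℂ V) := by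
      ext x
      show E ((lam⁻¹ • F) x) = x
      rw [LinearMap.smul_apply, map_smul, hlamx, smul_smul, inv_mul_cancel₀ hlamne, one_smul]
    have hmul2 : (lam⁻¹ • F) * E = (1 : Module.End ℂ V) := by
      ext x
      show (lam⁻¹ • F) (E x) = x
      rw [LinearMap.smul_apply, hFEx, smul_smul, inv_mul_cancel₀ hlamne, one_smul]
    set Eu : (Module.End ℂ V)ˣ := ⟨E, lam⁻¹ • F, hmul1, hmul2⟩ with hEu
    have hstep : ∀ (m : ℤ) (x : V),
        (↑(Eu ^ (m + 1)) : Module.End ℂ V) x = E ((↑(Eu ^ m) : Module.End ℂ V) x) := by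
      intro m x
      have h1 : Eu ^ (m + 1) = Eu * Eu ^ m := by rw [add_comm, zpow_one_add]
      rw [h1, Units.val_mul]
      rfl
    have hstep' : ∀ (m : ℤ) (x : V),
        F ((↑(Eu ^ m) : Module.End ℂ V) x) = lam • (↑(Eu ^ (m - 1)) : Module.End ℂ V) x := by
      intro m x
      have h0 : m - 1 + 1 = m := by ring
      have h1 := hstep (m - 1) x
      rw [h0] at h1
      rw [h1, hFEx]
    have hKpow : ∀ (m : ℤ) (x : V),
        K ((↑(Eu ^ m) : Module.End ℂ V) x) = q ^ m • (↑(Eu ^ m) : Module.End ℂ V) (K x) := by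
      intro m
      induction m using Int.induction_on with
      | zero => intro x; simp
      | succ n ih =>
        intro x
        rw [hstep, hKEx, ih, map_smul, hstep, smul_smul]
        congr 1
        rw [zpow_add_one₀ hq]
        ring
      | pred n ih =>
        intro x
        have hEinj2 : ∀ a b : V, E a = E b → a = b := by
          intro a b h
          have := hEinj (a - b) (by rw [map_sub, h, sub_self])
          exact sub_eq_zero.mp this
        have h1 : ∀ z : V, (↑(Eu ^ (-(n:ℤ))) : Module.End ℂ V) z
            = E ((↑(Eu ^ (-(n:ℤ) - 1)) : Module.End ℂ V) z) := by
          intro z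
          have h0 : -(n:ℤ) - 1 + 1 = -(n:ℤ) := by ring
          have := hstep (-(n:ℤ) - 1) z
          rw [h0] at this
          exact this
        have h2 : q • E (K ((↑(Eu ^ (-(n:ℤ) - 1)) : Module.End ℂ V) x))
            = q ^ (-(n:ℤ)) • E ((↑(Eu ^ (-(n:ℤ) - 1)) : Module.End ℂ V) (K x)) := by
          rw [← hKEx, ← h1, ih, h1]
        have h4 := congrArg (fun z => q⁻¹ • z) h2
        simp only [smul_smul, inv_mul_cancel₀ hq, one_smul] at h4
        apply hEinj2
        rw [h4, map_smul]
        congr 1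
        rw [zpow_sub_one₀ hq]
        ring
    -- the basis vectors
    set wv : ℤ → V := fun m => (r ^ m)⁻¹ • (↑(Eu ^ m) : Module.End ℂ V) v with hwv
    have hwne : ∀ m, wv m ≠ 0 := by
      intro m h
      simp only [hwv] at h
      rcases smul_eq_zero.mp h with h | h
      · exact (inv_ne_zero (zpow_ne_zero m hrne)) h
      · exact hvne (unit_inj _ h)
    have hwK : ∀ m, K (wv m) = (μ0 * q ^ m) • wv m := by
      intro m
      simp only [hwv]
      rw [map_smul, hKpow, hv, map_smul]
      simp only [smul_smul]
      congr 1
      ring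
    have hwE : ∀ m, E (wv m) = r • wv (m + 1) := by
      intro m
      simp only [hwv]
      rw [map_smul, ← hstep, smul_smul]
      congr 1
      rw [zpow_add_one₀ hrne]
      field_simp [zpow_ne_zero m hrne]
      try ring
    have hwF : ∀ m, F (wv m) = r • wv (m - 1) := by
      intro m
      simp only [hwv]
      rw [map_smul, hstep', smul_smul, smul_smul]
      congr 1
      rw [← hr, zpow_sub_one₀ hrne]
      field_simp [zpow_ne_zero m hrne]
      try ring
    have hwKi : ∀ m, Kinv (wv m) = (μ0⁻¹ * q ^ (-m)) • wv m := by
      intro m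
      have ha : μ0 * q ^ m ≠ 0 := mul_ne_zero hμ0ne (zpow_ne_zero m hq)
      rw [kinv_eig hKiK ha (hwK m)]
      congr 1
      rw [mul_inv, zpow_neg]
    -- linear independence
    have hli : LinearIndependent ℂ wv := by
      apply Module.End.eigenvectors_linearIndependent' K (fun m : ℤ => μ0 * q ^ m) ?_ wv ?_
      · intro a b hab
        simp only at hab
        have h1 : q ^ a = q ^ b := mul_left_cancel₀ hμ0ne hab
        have h2 : q ^ (a - b) = 1 := by
          rw [zpow_sub₀ hq, h1, div_self (zpow_ne_zero b hq)]
        have := hqz _ h2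
        omega
      · intro m
        exact ⟨Module.End.mem_eigenspace_iff.mpr (hwK m), hwne m⟩
    -- spanning
    have hsp : ⊤ ≤ Submodule.span ℂ (Set.range wv) := by
      have hWinv : ∀ x ∈ Submodule.span ℂ (Set.range wv),
          K x ∈ Submodule.span ℂ (Set.range wv) ∧ Kinv x ∈ Submodule.span ℂ (Set.range wv) ∧
          E x ∈ Submodule.span ℂ (Set.range wv) ∧ F x ∈ Submodule.span ℂ (Set.range wv) := by
        intro x hx
        refine ⟨span_invariant K wv ?_ x hx, span_invariant Kinv wv ?_ x hx,
          span_invariant E wv ?_ x hx, span_invariant F wv ?_ x hx⟩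
        · intro m; rw [hwK]; exact Submodule.smul_mem _ _ (Submodule.subset_span ⟨m, rfl⟩)
        · intro m; rw [hwKi]; exact Submodule.smul_mem _ _ (Submodule.subset_span ⟨m, rfl⟩)
        · intro m; rw [hwE]; exact Submodule.smul_mem _ _ (Submodule.subset_span ⟨m + 1, rfl⟩)
        · intro m; rw [hwF]; exact Submodule.smul_mem _ _ (Submodule.subset_span ⟨m - 1, rfl⟩)
      rcases hirr _ hWinv with h | h
      · exfalso
        have hm : wv 0 ∈ Submodule.span ℂ (Set.range wv) := Submodule.subset_span ⟨0, rfl⟩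
        rw [h] at hm
        exact hwne 0 (by simpa using hm)
      · exact h.ge
    set B : Module.Basis ℤ ℂ V := Module.Basis.mk hli hsp with hB
    have he : ∀ k : ℤ, B.repr.symm (Finsupp.single k (1:ℂ)) = wv k := by
      intro k
      rw [Module.Basis.repr_symm_single_one, hB, Module.Basis.mk_apply]
    have hsingle : ∀ (m : ℤ) (b : ℂ),
        Finsupp.single m b = b • Finsupp.single m (1:ℂ) := by
      intro m b
      rw [Finsupp.smul_single', mul_one]
    refine ⟨r, μ0, hrne, hμ0ne, B.repr.symm, ?_, ?_, ?_, ?_⟩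
    · -- K
      have key : ∀ (m : ℤ) (b : ℂ),
          B.repr.symm (piK q μ0 (Finsupp.single m b)) = K (B.repr.symm (Finsupp.single m b)) := by
        intro m b
        have h1 : piK q μ0 (Finsupp.single m b) = b • ((μ0 * q ^ m) • Finsupp.single m (1:ℂ)) :=
          op_single _ m b
        rw [h1]
        conv_rhs => rw [hsingle m b]
        rw [map_smul, map_smul, map_smul, map_smul, he, hwK]
      intro x
      have h : ((B.repr.symm : (ℤ →₀ ℂ) ≃ₗ[ℂ] V) : (ℤ →₀ ℂ) →ₗ[ℂ] V).comp (piK q μ0)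
          = K.comp ((B.repr.symm : (ℤ →₀ ℂ) ≃ₗ[ℂ] V) : (ℤ →₀ ℂ) →ₗ[ℂ] V) :=
        Finsupp.lhom_ext fun m b => key m b
      exact LinearMap.congr_fun h x
    · -- Kinv
      have key : ∀ (m : ℤ) (b : ℂ),
          B.repr.symm (piKinv q μ0 (Finsupp.single m b))
            = Kinv (B.repr.symm (Finsupp.single m b)) := by
        intro m b
        have h1 : piKinv q μ0 (Finsupp.single m b)
            = b • ((μ0⁻¹ * q ^ (-m)) • Finsupp.single m (1:ℂ)) := op_single _ m b
        rw [h1]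
        conv_rhs => rw [hsingle m b]
        rw [map_smul, map_smul, map_smul, map_smul, he, hwKi]
      intro x
      have h : ((B.repr.symm : (ℤ →₀ ℂ) ≃ₗ[ℂ] V) : (ℤ →₀ ℂ) →ₗ[ℂ] V).comp (piKinv q μ0)
          = Kinv.comp ((B.repr.symm : (ℤ →₀ ℂ) ≃ₗ[ℂ] V) : (ℤ →₀ ℂ) →ₗ[ℂ] V) :=
        Finsupp.lhom_ext fun m b => key m b
      exact LinearMap.congr_fun h x
    · -- E
      have key : ∀ (m : ℤ) (b : ℂ),
          B.repr.symm (piE r (Finsupp.single m b)) = E (B.repr.symm (Finsupp.single m b)) := by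
        intro m b
        have h1 : piE r (Finsupp.single m b)
            = b • (r • Finsupp.single (m + 1) (1:ℂ)) := op_single _ m b
        rw [h1]
        conv_rhs => rw [hsingle m b]
        rw [map_smul, map_smul, map_smul, map_smul, he, he, hwE]
      intro x
      have h : ((B.repr.symm : (ℤ →₀ ℂ) ≃ₗ[ℂ] V) : (ℤ →₀ ℂ) →ₗ[ℂ] V).comp (piE r)
          = E.comp ((B.repr.symm : (ℤ →₀ ℂ) ≃ₗ[ℂ] V) : (ℤ →₀ ℂ) →ₗ[ℂ] V) :=
        Finsupp.lhom_ext fun m b => key m b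
      exact LinearMap.congr_fun h x
    · -- F
      have key : ∀ (m : ℤ) (b : ℂ),
          B.repr.symm (piF r (Finsupp.single m b)) = F (B.repr.symm (Finsupp.single m b)) := by
        intro m b
        have h1 : piF r (Finsupp.single m b)
            = b • (r • Finsupp.single (m - 1) (1:ℂ)) := op_single _ m b
        rw [h1]
        conv_rhs => rw [hsingle m b]
        rw [map_smul, map_smul, map_smul, map_smul, he, he, hwF]
      intro x
      have h : ((B.repr.symm : (ℤ →₀ ℂ) ≃ₗ[ℂ] V) : (ℤ →₀ ℂ) →ₗ[ℂ] V).comp (piF r)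
          = F.comp ((B.repr.symm : (ℤ →₀ ℂ) ≃ₗ[ℂ] V) : (ℤ →₀ ℂ) →ₗ[ℂ] V) :=
        Finsupp.lhom_ext fun m b => key m b
      exact LinearMap.congr_fun h x
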